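/- arXiv:2604.15824 — 2 statements merged into one kernel-verified Lean document; each statement's English description precedes it below -/
import Mathlib

section
/- Let G be a connected simple graph of even order, and let w be a vertex of odd degree such that G − w is connected. Then G has an odd factor F such that G − E(F) is a forest and F contains every edge incident to w. -/
open SimpleGraph Finset

section Aux

lemma zmod2_em (a : ZMod 2) : a = 0 ∨ a = 1 := by revert a; decide

lemma odd_iff_cast (n : ℕ) : Odd n ↔ (n : ZMod 2) = 1 := by
  rw [Nat.odd_iff, ← ZMod.natCast_mod n 2]
  rcases Nat.mod_two_eq_zero_or_one n with h | h <;> rw [h] <;> simp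

lemma even_cast (n : ℕ) (h : Even n) : (n : ZMod 2) = 0 := by
  rw [← ZMod.natCast_mod n 2, Nat.even_iff.mp h]; rfl

private lemma z11 : ∀ t : ZMod 2, 1 + (1 + t) = t := by decide

lemma acyclic_anti {V : Type*} {H K : SimpleGraph V} (h : H ≤ K) (hK : K.IsAcyclic) :
    H.IsAcyclic := fun _ c hc => hK (c.mapLe h) (hc.mapLe h)

lemma sup_edge_acyclic' {V : Type*} {H : SimpleGraph V} (hH : H.IsAcyclic) {u v : V}
    (huv : u ≠ v) (hr : ¬H.Reachable u v) : (H ⊔ edge u v).IsAcyclic := by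
  intro x c hc
  by_cases he : s(u, v) ∈ c.edges
  · have h2 : (H ⊔ edge u v).Adj u v ∧ ((H ⊔ edge u v) \ fromEdgeSet {s(u, v)}).Reachable u v :=
      adj_and_reachable_delete_edges_iff_exists_cycle.mpr ⟨x, c, hc, he⟩
    apply hr
    refine h2.2.mono ?_
    intro a b hab
    rcases hab with ⟨hab1 | hab1, hab2⟩
    · exact hab1
    · exfalso
      rw [edge_adj] at hab1
      apply hab2
      simp only [fromEdgeSet_adj, Set.mem_singleton_iff]
      refine ⟨?_, hab1.2⟩
      rcases hab1.1 with ⟨rfl, rfl⟩ | ⟨rfl, rfl⟩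
      · rfl
      · exact Sym2.eq_swap
  · have hsub : ∀ e ∈ c.edges, e ∈ H.edgeSet := by
      intro e hec
      have := c.edges_subset_edgeSet hec
      rw [edgeSet_sup] at this
      rcases this with h1 | h1
      · exact h1
      · exfalso
        rw [edge_edgeSet_of_ne huv, Set.mem_singleton_iff] at h1
        exact he (h1 ▸ hec)
    exact hH (c.transfer H hsub) (hc.transfer hsub)

lemma exists_max_acyclic {V : Type*} [Finite V] (Gw : SimpleGraph V) :
    ∃ A : SimpleGraph V, A ≤ Gw ∧ A.IsAcyclic ∧ ∀ u v, Gw.Reachable u v → A.Reachable u v := by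
  set s : Set (SimpleGraph V) := {H | H ≤ Gw ∧ H.IsAcyclic} with hs
  have hsne : s.Nonempty := ⟨⊥, bot_le, isAcyclic_bot⟩
  obtain ⟨A, hAs, hAmax⟩ := Set.Finite.exists_maximalFor id s s.toFinite hsne
  have hadj : ∀ u v, Gw.Adj u v → A.Reachable u v := by
    intro u v huv
    by_contra hn
    have hacyc : (A ⊔ edge u v).IsAcyclic := sup_edge_acyclic' hAs.2 huv.ne hn
    have hle : A ⊔ edge u v ≤ Gw := by
      refine sup_le hAs.1 ?_
      intro a b hab
      rw [edge_adj] at hab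
      rcases hab.1 with ⟨rfl, rfl⟩ | ⟨rfl, rfl⟩
      · exact huv
      · exact huv.symm
    have heq : A = A ⊔ edge u v := le_antisymm le_sup_left (hAmax ⟨hle, hacyc⟩ le_sup_left)
    apply hn
    have : (A ⊔ edge u v).Adj u v :=
      (sup_adj _ _ _ _).mpr (Or.inr ((edge_adj u v u v).mpr ⟨Or.inl ⟨rfl, rfl⟩, huv.ne⟩))
    rw [← heq] at this
    exact this.reachable
  refine ⟨A, hAs.1, hAs.2, fun u v hr => ?_⟩
  obtain ⟨p⟩ := hr
  induction p with
  | nil => rfl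
  | cons h p ih => exact (hadj _ _ h).trans ih

variable {V : Type*} [Fintype V] [DecidableEq V]

lemma walk_parity {H : SimpleGraph V} {u v : V} (P : H.Walk u v) (x : V) :
    (P.edges.map (fun e => if x ∈ e then (1 : ZMod 2) else 0)).sum =
      (if x = u then 1 else 0) + (if x = v then 1 else 0) := by
  induction P with
  | @nil a =>
    simp only [SimpleGraph.Walk.edges_nil, List.map_nil, List.sum_nil]
    rcases eq_or_ne x a with rfl | h
    · rw [if_pos rfl]; decide
    · rw [if_neg h, add_zero]
  | @cons a b c h P ih =>
    simp only [SimpleGraph.Walk.edges_cons, List.map_cons, List.sum_cons, ih]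
    have hab : a ≠ b := h.ne
    have hmem : (x ∈ s(a, b)) ↔ (x = a ∨ x = b) := Sym2.mem_iff
    rcases eq_or_ne x a with rfl | hxa
    · rw [if_pos (hmem.mpr (Or.inl rfl)), if_pos rfl, if_neg hab, zero_add]
    · rcases eq_or_ne x b with rfl | hxb
      · rw [if_pos (hmem.mpr (Or.inr rfl)), if_pos rfl, if_neg hxa, zero_add, z11]
      · rw [if_neg (fun hc => (hmem.mp hc).elim hxa hxb), if_neg hxa, if_neg hxb, zero_add,
          zero_add]

lemma list_count_sum (l : List (Sym2 V)) (g : Sym2 V → ZMod 2) :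
    ∑ e : Sym2 V, (l.count e : ZMod 2) * g e = (l.map g).sum := by
  induction l with
  | nil => simp
  | cons a l ih =>
    simp only [List.count_cons, List.map_cons, List.sum_cons, ← ih, beq_iff_eq]
    push_cast
    simp only [add_mul, ite_mul, one_mul, zero_mul]
    rw [Finset.sum_add_distrib, Finset.sum_ite_eq, if_pos (Finset.mem_univ a), add_comm]

lemma parity_realization {H : SimpleGraph V} (hH : H.Connected) (p : V → ZMod 2)
    (hp : ∑ v, p v = 0) :
    ∃ S : Finset (Sym2 V), ↑S ⊆ H.edgeSet ∧
      ∀ x : V, (((S.filter (fun e => x ∈ e)).card : ℕ) : ZMod 2) = p x := by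
  have hne : Nonempty V := hH.nonempty
  obtain ⟨r⟩ := hne
  have hP : ∀ v : V, Nonempty (H.Walk v r) := fun v => hH.preconnected v r
  have P : ∀ v : V, H.Walk v r := fun v => (hP v).some
  set f : Sym2 V → ZMod 2 := fun e => ∑ v, p v * ((P v).edges.count e : ZMod 2) with hf
  refine ⟨Finset.univ.filter (fun e => f e = 1), ?_, ?_⟩
  · intro e he
    simp only [Finset.coe_filter, Set.mem_setOf_eq] at he
    have h1 : f e ≠ 0 := by rw [he.2]; decide
    have h2 : ∃ v, p v * ((P v).edges.count e : ZMod 2) ≠ 0 := by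
      by_contra hcon
      push_neg at hcon
      exact h1 (by rw [hf]; simpa using Finset.sum_eq_zero (fun v _ => hcon v))
    obtain ⟨v, hv⟩ := h2
    have h3 : e ∈ (P v).edges := by
      by_contra h4
      rw [List.count_eq_zero_of_not_mem h4] at hv
      simp at hv
    exact (P v).edges_subset_edgeSet h3
  · intro x
    have step1 : ((Finset.filter (fun e => x ∈ e)
          (Finset.univ.filter (fun e => f e = 1))).card : ZMod 2)
        = ∑ e : Sym2 V, (if x ∈ e then (1 : ZMod 2) else 0) * f e := by
      rw [Finset.card_filter]
      push_cast
      rw [Finset.sum_filter]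
      refine Finset.sum_congr rfl (fun e _ => ?_)
      rcases zmod2_em (f e) with h0 | h1
      · rw [h0, mul_zero, if_neg (by decide : ¬(0 : ZMod 2) = 1)]
      · rw [h1, mul_one, if_pos rfl]
    rw [step1]
    have step2 : ∀ e : Sym2 V, (if x ∈ e then (1 : ZMod 2) else 0) * f e
        = ∑ v, p v * (((P v).edges.count e : ZMod 2) * (if x ∈ e then 1 else 0)) := by
      intro e
      rw [hf]
      simp only [Finset.mul_sum]
      refine Finset.sum_congr rfl (fun v _ => ?_)
      ring
    simp only [step2]
    rw [Finset.sum_comm]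
    have step3 : ∀ v : V,
        ∑ e : Sym2 V, p v * (((P v).edges.count e : ZMod 2) * (if x ∈ e then 1 else 0))
        = p v * ((if x = v then 1 else 0) + (if x = r then 1 else 0)) := by
      intro v
      rw [← Finset.mul_sum,
        list_count_sum ((P v).edges) (fun e => if x ∈ e then (1 : ZMod 2) else 0), walk_parity]
    simp only [step3]
    simp only [mul_add, Finset.sum_add_distrib]
    rw [← Finset.sum_mul, hp, zero_mul, add_zero]
    simp only [mul_ite, mul_one, mul_zero]
    rw [Finset.sum_ite_eq Finset.univ x p, if_pos (Finset.mem_univ x)]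

lemma double_count (B : Finset (Sym2 V)) (hB : ∀ e ∈ B, ¬e.IsDiag) :
    ∑ v : V, (((B.filter (fun e => v ∈ e)).card : ℕ) : ZMod 2) = 0 := by
  have h1 : ∑ v : V, (B.filter (fun e => v ∈ e)).card
      = ∑ e ∈ B, (Finset.univ.filter (fun v : V => v ∈ e)).card := by
    simp only [Finset.card_filter]
    rw [Finset.sum_comm]
  have h2 : ∀ e ∈ B, (Finset.univ.filter (fun v : V => v ∈ e)).card = 2 := by
    intro e
    refine Sym2.ind (fun a b he => ?_) e
    have hab : a ≠ b := fun h => (hB _ he) (Sym2.mk_isDiag_iff.mpr h)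
    have : Finset.univ.filter (fun v : V => v ∈ s(a, b)) = {a, b} := by
      ext v; simp [Sym2.mem_iff]
    rw [this, Finset.card_pair hab]
  rw [← Nat.cast_sum, h1, Finset.sum_congr rfl h2, Finset.sum_const, smul_eq_mul]
  exact even_cast _ ⟨B.card, by ring⟩

end Aux


/-- Let `G` be a connected graph of even order and `w` a vertex of odd degree such that
`G - w` is connected.  Then `G` has an odd factor `F` (every vertex has odd `F`-degree)
such that `G - E(F)` is a forest and `F` contains every edge incident to `w`. -/
theorem stmt15 {V : Type*} [Fintype V] (G : SimpleGraph V)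
    (hconn : G.Connected) (heven : Even (Fintype.card V))
    (w : V) (hw : Odd (G.neighborSet w).ncard)
    (hGw : (G.induce {v : V | v ≠ w}).Connected) :
    ∃ F ⊆ G.edgeSet,
      (∀ v : V, Odd {e : Sym2 V | e ∈ F ∧ v ∈ e}.ncard) ∧
      (SimpleGraph.fromEdgeSet (G.edgeSet \ F)).IsAcyclic ∧
      (∀ e ∈ G.edgeSet, w ∈ e → e ∈ F) := by
  classical
  -- the graph with all edges at w removed
  set Gw : SimpleGraph V := G.deleteEdges {e : Sym2 V | w ∈ e} with hGwdef
  obtain ⟨A, hAle, hAacyc, hAreach⟩ := exists_max_acyclic Gw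
  -- a neighbor of w
  have hwpos : (G.neighborSet w).ncard ≠ 0 := by rcases hw with ⟨k, hk⟩; omega
  obtain ⟨u₀, hu₀⟩ : (G.neighborSet w).Nonempty := Set.nonempty_of_ncard_ne_zero hwpos
  have hadjwu : G.Adj w u₀ := hu₀
  have hne : u₀ ≠ w := hadjwu.ne'
  -- reachability in Gw between non-w vertices
  have hGwreach : ∀ u v : V, u ≠ w → v ≠ w → Gw.Reachable u v := by
    intro u v hu hv
    have h1 : (G.induce {v : V | v ≠ w}).Reachable ⟨u, hu⟩ ⟨v, hv⟩ := hGw.preconnected _ _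
    have hmap : ∀ a b : {v : V | v ≠ w}, (G.induce {v : V | v ≠ w}).Adj a b → Gw.Adj a.1 b.1 := by
      intro a b hab
      rw [comap_adj] at hab
      rw [hGwdef, deleteEdges_adj]
      refine ⟨hab, ?_⟩
      intro hmem
      rcases Sym2.mem_iff.mp hmem with h | h
      · exact a.2 h.symm
      · exact b.2 h.symm
    exact h1.map ⟨Subtype.val, fun {a b} h => hmap a b h⟩
  -- w is isolated in A
  have hAnoW : ∀ x, ¬A.Adj w x := by
    intro x hx
    have h1 := hAle hx
    rw [hGwdef, deleteEdges_adj] at h1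
    exact h1.2 (Sym2.mem_mk_left w x)
  have hAwnr : ¬A.Reachable w u₀ := by
    intro h
    obtain ⟨p⟩ := h
    cases p with
    | nil => exact hne rfl
    | cons h p => exact hAnoW _ h
  -- the spanning tree T
  set T : SimpleGraph V := A ⊔ edge w u₀ with hT
  have hTacyc : T.IsAcyclic := sup_edge_acyclic' hAacyc hadjwu.ne hAwnr
  have hTle : T ≤ G := by
    refine sup_le (hAle.trans (deleteEdges_le _)) ?_
    intro a b hab
    rw [edge_adj] at hab
    rcases hab.1 with ⟨rfl, rfl⟩ | ⟨rfl, rfl⟩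
    · exact hadjwu
    · exact hadjwu.symm
  have hTadjwu : T.Adj w u₀ :=
    (sup_adj _ _ _ _).mpr (Or.inr ((edge_adj w u₀ w u₀).mpr ⟨Or.inl ⟨rfl, rfl⟩, hadjwu.ne⟩))
  have hTw : ∀ x, T.Adj w x → x = u₀ := by
    intro x hx
    rcases (sup_adj _ _ _ _).mp hx with h | h
    · exact absurd h (hAnoW x)
    · rw [edge_adj] at h
      rcases h.1 with ⟨_, rfl⟩ | ⟨hww, rfl⟩
      · rfl
      · exact absurd hww hadjwu.ne
  have hTvw : ∀ v, T.Reachable v w := by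
    intro v
    rcases eq_or_ne v w with rfl | hv
    · exact Reachable.refl v
    · have h1 : A.Reachable v u₀ := hAreach _ _ (hGwreach v u₀ hv hne)
      exact (h1.mono le_sup_left).trans hTadjwu.symm.reachable
  have hTconn : T.Connected := by
    rw [connected_iff]
    exact ⟨fun a b => (hTvw a).trans (hTvw b).symm, ⟨w⟩⟩
  -- every T-edge at w is s(w,u₀)
  have haux : ∀ e ∈ T.edgeSet, w ∈ e → e = s(w, u₀) := by
    intro e
    refine Sym2.ind (fun a b heT hwe => ?_) e
    rw [mem_edgeSet] at heT
    rcases Sym2.mem_iff.mp hwe with rfl | rfl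
    · rw [hTw b heT]
    · rw [hTw a heT.symm]
      exact Sym2.eq_swap
  -- edge finsets
  set Eg : Finset (Sym2 V) := G.edgeSet.toFinite.toFinset with hEg
  set Et : Finset (Sym2 V) := T.edgeSet.toFinite.toFinset with hEt
  have memEg : ∀ e : Sym2 V, e ∈ Eg ↔ e ∈ G.edgeSet := fun e => Set.Finite.mem_toFinset _
  have memEt : ∀ e : Sym2 V, e ∈ Et ↔ e ∈ T.edgeSet := fun e => Set.Finite.mem_toFinset _
  set B : Finset (Sym2 V) := Eg \ Et with hB
  have memB : ∀ e : Sym2 V, e ∈ B ↔ e ∈ G.edgeSet ∧ e ∉ T.edgeSet := by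
    intro e
    rw [hB, Finset.mem_sdiff, memEg, memEt]
  have hBdiag : ∀ e ∈ B, ¬e.IsDiag := fun e he =>
    G.not_isDiag_of_mem_edgeSet ((memB e).mp he).1
  -- parity targets
  have zAA : ∀ a : ZMod 2, a + (1 + a) = 1 := by decide
  have zB : ∀ a : ZMod 2, 1 + a = 1 → a = 0 := by decide
  set p : V → ZMod 2 := fun v => 1 + (((B.filter (fun e => v ∈ e)).card : ℕ) : ZMod 2) with hp
  have hpv : ∀ v : V, p v = 1 + (((B.filter (fun e => v ∈ e)).card : ℕ) : ZMod 2) :=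
    fun v => by rw [hp]
  have hpsum : ∑ v, p v = 0 := by
    rw [hp]
    rw [Finset.sum_add_distrib, double_count B hBdiag, add_zero, Finset.sum_const,
      Finset.card_univ, nsmul_eq_mul, mul_one]
    exact even_cast _ heven
  obtain ⟨S, hS1, hS2⟩ := parity_realization hTconn p hpsum
  have hSB : ∀ e : Sym2 V, e ∈ B → e ∉ S := by
    intro e heB heS
    exact ((memB e).mp heB).2 (hS1 heS)
  refine ⟨↑(B ∪ S), ?_, ?_, ?_, ?_⟩
  · -- F ⊆ edgeSet
    intro e he
    rcases Finset.mem_union.mp (Finset.mem_coe.mp he) with h | h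
    · exact ((memB e).mp h).1
    · exact edgeSet_mono hTle (hS1 h)
  · -- odd degrees
    intro v
    have hset : {e : Sym2 V | e ∈ (↑(B ∪ S) : Set (Sym2 V)) ∧ v ∈ e}
        = ↑((B ∪ S).filter (fun e => v ∈ e)) := by
      ext e
      simp [Finset.mem_filter]
    rw [hset, Set.ncard_coe_finset, odd_iff_cast, Finset.filter_union,
      Finset.card_union_of_disjoint (by
        rw [Finset.disjoint_left]
        intro e he1 he2
        exact hSB e (Finset.mem_filter.mp he1).1 (Finset.mem_filter.mp he2).1)]
    push_cast
    rw [hS2 v, hpv v]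
    exact zAA _
  · -- forest
    have hsub : G.edgeSet \ ↑(B ∪ S) ⊆ T.edgeSet := by
      rintro e ⟨he1, he2⟩
      by_contra he3
      exact he2 (Finset.mem_coe.mpr (Finset.mem_union_left _ ((memB e).mpr ⟨he1, he3⟩)))
    exact acyclic_anti ((fromEdgeSet_mono hsub).trans_eq (fromEdgeSet_edgeSet T)) hTacyc
  · -- edges at w
    intro e he hwe
    by_cases heT : e ∈ T.edgeSet
    · have he' : e = s(w, u₀) := haux e heT hwe
      subst he'
      -- show s(w,u₀) ∈ S
      have hEtw : Et.filter (fun e => w ∈ e) = {s(w, u₀)} := by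
        ext e'
        simp only [Finset.mem_filter, Finset.mem_singleton, memEt]
        constructor
        · rintro ⟨h1, h2⟩
          exact haux e' h1 h2
        · rintro rfl
          exact ⟨T.mem_edgeSet.mpr hTadjwu, Sym2.mem_mk_left w u₀⟩
      have hEtEg : Et ⊆ Eg := by
        intro e' he'
        exact (memEg e').mpr (edgeSet_mono hTle ((memEt e').mp he'))
      have hEgsplit : Eg.filter (fun e => w ∈ e)
          = Et.filter (fun e => w ∈ e) ∪ B.filter (fun e => w ∈ e) := by
        rw [hB, ← Finset.filter_union]
        congr 1
        rw [Finset.union_comm, Finset.sdiff_union_of_subset hEtEg]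
      have hdisj2 : Disjoint (Et.filter (fun e => w ∈ e)) (B.filter (fun e => w ∈ e)) := by
        rw [Finset.disjoint_left]
        intro e' h1 h2
        exact ((memB e').mp (Finset.mem_filter.mp h2).1).2
          ((memEt e').mp (Finset.mem_filter.mp h1).1)
      -- degree of w
      have hcardEg : (Eg.filter (fun e => w ∈ e)).card = (G.neighborSet w).ncard := by
        have himg : Eg.filter (fun e => w ∈ e)
            = (G.neighborSet w).toFinite.toFinset.image (fun x => s(w, x)) := by
          ext e'
          simp only [Finset.mem_filter, Finset.mem_image, Set.Finite.mem_toFinset, memEg]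
          constructor
          · rintro ⟨h1, h2⟩
            revert h1 h2
            refine Sym2.ind (fun a b h1 h2 => ?_) e'
            rw [mem_edgeSet] at h1
            rcases Sym2.mem_iff.mp h2 with rfl | rfl
            · exact ⟨b, h1, rfl⟩
            · exact ⟨a, h1.symm, Sym2.eq_swap⟩
          · rintro ⟨x, hx, rfl⟩
            exact ⟨G.mem_edgeSet.mpr hx, Sym2.mem_mk_left w x⟩
        rw [himg, Finset.card_image_of_injective _ (fun x y hxy => Sym2.congr_right.mp hxy),
          ← Set.ncard_eq_toFinset_card]
      have hodd : ((Eg.filter (fun e => w ∈ e)).card : ZMod 2) = 1 := by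
        rw [hcardEg, ← odd_iff_cast]; exact hw
      rw [hEgsplit, Finset.card_union_of_disjoint hdisj2, hEtw, Finset.card_singleton] at hodd
      push_cast at hodd
      have hB0 : (((B.filter (fun e => w ∈ e)).card : ℕ) : ZMod 2) = 0 := zB _ hodd
      have hpw : p w = 1 := by rw [hpv w, hB0, add_zero]
      have hX1 : (((S.filter (fun e => w ∈ e)).card : ℕ) : ZMod 2) = 1 := by
        rw [hS2 w, hpw]
      have hXne : (S.filter (fun e => w ∈ e)).Nonempty := by
        rw [Finset.nonempty_iff_ne_empty]
        intro h0
        rw [h0, Finset.card_empty, Nat.cast_zero] at hX1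
        exact absurd hX1 (by decide)
      obtain ⟨e', he'2⟩ := hXne
      obtain ⟨heS, hwe'⟩ := Finset.mem_filter.mp he'2
      have : e' = s(w, u₀) := haux e' (hS1 heS) hwe'
      subst this
      exact Finset.mem_coe.mpr (Finset.mem_union_right _ heS)
    · exact Finset.mem_coe.mpr (Finset.mem_union_left _ ((memB e).mpr ⟨he, heT⟩))
end

section
/- Let G be a 3-connected simple graph and let w, u be two nonadjacent vertices of G. Then there exists a chordless path P in G connecting w and u such that G − V(P) is connected. -/
open SimpleGraph

namespace Tutte17

variable {V : Type*}

/-- Connectivity within a vertex set `S`, via walks in `G` whose support stays in `S`. -/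
def Linked (G : SimpleGraph V) (S : Set V) (a b : V) : Prop :=
  ∃ p : G.Walk a b, ∀ x ∈ p.support, x ∈ S

namespace Linked

variable {G : SimpleGraph V} {S S' : Set V} {a b c : V}

lemma refl (ha : a ∈ S) : Linked G S a a :=
  ⟨Walk.nil, by simpa using ha⟩

lemma symm (h : Linked G S a b) : Linked G S b a := by
  obtain ⟨p, hp⟩ := h
  exact ⟨p.reverse, by simpa using hp⟩

lemma trans (h : Linked G S a b) (h' : Linked G S b c) : Linked G S a c := by
  obtain ⟨p, hp⟩ := h; obtain ⟨q, hq⟩ := h'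
  refine ⟨p.append q, fun x hx => ?_⟩
  rcases (Walk.mem_support_append_iff _ _).1 hx with h | h
  exacts [hp x h, hq x h]

lemma mono (hS : S ⊆ S') (h : Linked G S a b) : Linked G S' a b := by
  obtain ⟨p, hp⟩ := h; exact ⟨p, fun x hx => hS (hp x hx)⟩

lemma mem_left (h : Linked G S a b) : a ∈ S := by
  obtain ⟨p, hp⟩ := h; exact hp a p.start_mem_support

lemma mem_right (h : Linked G S a b) : b ∈ S := by
  obtain ⟨p, hp⟩ := h; exact hp b p.end_mem_support

lemma adj (h : Linked G S a b) (hbc : G.Adj b c) (hc : c ∈ S) : Linked G S a c :=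
  h.trans ⟨Walk.cons hbc Walk.nil, by simp [h.mem_right, hc]⟩

/-- walk staying in `S`, starting in a set `T` closed under `G`-adjacency within `S`,
ends in `T`. -/
lemma stay {T : Set V} (h : Linked G S a b) (haT : a ∈ T)
    (hcl : ∀ t ∈ T, ∀ q, G.Adj t q → q ∈ S → q ∈ T) : b ∈ T := by
  obtain ⟨p, hp⟩ := h
  induction p with
  | nil => exact haT
  | @cons x y z hxy q ih =>
    refine ih ?_ ?_
    · exact hcl x haT y hxy (hp y (by simp))
    · intro t ht; exact hp t (by simp [ht])

/-- every vertex on a witnessing walk is linked to the start. -/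
lemma support_linked {p : G.Walk a b} (hp : ∀ x ∈ p.support, x ∈ S) :
    ∀ x ∈ p.support, Linked G S a x := by
  induction p with
  | nil => intro x hx; rw [Walk.support_nil, List.mem_singleton] at hx; subst hx
           exact Linked.refl (hp _ (by simp))
  | @cons x y z hxy q ih =>
    intro t ht
    have hxS : x ∈ S := hp _ (by simp)
    have hyS : y ∈ S := hp _ (by simp)
    rw [Walk.support_cons, List.mem_cons] at ht
    rcases ht with rfl | ht
    · exact Linked.refl hxS
    · have h1 : Linked G S x y := ⟨Walk.cons hxy Walk.nil, by
        intro s hs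
        simp only [Walk.support_cons, Walk.support_nil, List.mem_cons,
          List.mem_singleton, List.not_mem_nil, or_false] at hs
        rcases hs with rfl | rfl <;> assumption⟩
      exact h1.trans (ih (fun s hs => hp s (by simp [hs])) t ht)

/-- A linked pair is linked within the linked-component of the start. -/
lemma within (h : Linked G S a b) : Linked G {x | Linked G S a x} a b := by
  obtain ⟨p, hp⟩ := h
  exact ⟨p, fun x hx => support_linked hp x hx⟩

end Linked

section Bridges

variable {G : SimpleGraph V} {S : Set V} {a b : V}

lemma linked_of_induce_connected (hc : (G.induce S).Connected)
    (ha : a ∈ S) (hb : b ∈ S) : Linked G S a b := by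
  obtain ⟨p⟩ := hc.preconnected ⟨a, ha⟩ ⟨b, hb⟩
  refine ⟨p.map ⟨Subtype.val, fun h => h⟩, fun x hx => ?_⟩
  rw [Walk.support_map, List.mem_map] at hx
  obtain ⟨v, _, rfl⟩ := hx
  exact v.2

private lemma reach_aux {G : SimpleGraph V} {S : Set V} :
    ∀ {a b : V} (p : G.Walk a b), (∀ x ∈ p.support, x ∈ S) →
      ∀ (ha : a ∈ S) (hb : b ∈ S), (G.induce S).Reachable ⟨a, ha⟩ ⟨b, hb⟩ := by
  intro a b p
  induction p with
  | nil => intro _ ha hb; exact Reachable.refl _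
  | @cons x y z hxy q ih =>
    intro hp ha hb
    have hy : y ∈ S := hp y (by simp)
    have h1 : (G.induce S).Adj ⟨x, ha⟩ ⟨y, hy⟩ := hxy
    exact (h1.reachable).trans (ih (fun s hs => hp s (by simp [hs])) hy hb)

lemma induce_connected_of_linked (hne : S.Nonempty)
    (h : ∀ a ∈ S, ∀ b ∈ S, Linked G S a b) : (G.induce S).Connected := by
  rw [SimpleGraph.connected_iff]
  refine ⟨?_, ⟨⟨hne.choose, hne.choose_spec⟩⟩⟩
  rintro ⟨a, ha⟩ ⟨b, hb⟩
  obtain ⟨p, hp⟩ := h a ha b hb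
  exact reach_aux p hp ha hb

end Bridges

section Chordless

variable {G : SimpleGraph V} {S : Set V} {a b : V}

lemma edges_of_length_one {x y : V} {p : G.Walk x y} (h : p.length = 1) :
    p.edges = [s(x, y)] := by
  cases p with
  | nil => simp at h
  | cons hadj q =>
    cases q with
    | nil => simp
    | cons h' q' => simp [Walk.length_cons] at h

/-- Key construction: a minimal-length walk from `a` to `b` inside `S` is a chordless
(induced) path. -/
lemma exists_chordless_path (h : Linked G S a b) :
    ∃ p : G.Walk a b, p.IsPath ∧ (∀ x ∈ p.support, x ∈ S) ∧
      ∀ x ∈ p.support, ∀ y ∈ p.support, G.Adj x y → s(x, y) ∈ p.edges := by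
  classical
  let L : Set ℕ := {n | ∃ p : G.Walk a b, (∀ x ∈ p.support, x ∈ S) ∧ p.length = n}
  have hLne : L.Nonempty := by
    obtain ⟨p, hp⟩ := h
    exact ⟨p.length, p, hp, rfl⟩
  obtain ⟨p₀, hp₀S, hp₀len⟩ := Nat.sInf_mem hLne
  have hmin : ∀ r : G.Walk a b, (∀ x ∈ r.support, x ∈ S) → sInf L ≤ r.length :=
    fun r hr => Nat.sInf_le ⟨r, hr, rfl⟩
  set q := p₀.bypass with hq
  have hqS : ∀ x ∈ q.support, x ∈ S := fun x hx => hp₀S x (p₀.support_bypass_subset hx)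
  have hqlen : q.length ≤ sInf L := hp₀len ▸ p₀.length_bypass_le
  refine ⟨q, p₀.bypass_isPath, hqS, ?_⟩
  intro x hx y hy hadj
  by_contra hne
  have hxy : x ≠ y := G.ne_of_adj hadj
  set t := q.takeUntil x hx with ht
  set d := q.dropUntil x hx with hd
  have hspec : t.append d = q := q.take_spec hx
  have hlen : t.length + d.length = q.length := by
    have := congrArg Walk.length hspec
    rwa [Walk.length_append] at this
  have hy' : y ∈ t.support ∨ y ∈ d.support := by
    rw [← hspec, Walk.mem_support_append_iff] at hy; exact hy
  rcases hy' with hyt | hyd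
  · -- y occurs before x : build a → y, edge y-x, d : x → b
    set t' := t.takeUntil y hyt with ht'
    set t'' := t.dropUntil y hyt with ht''
    have hspec2 : t'.append t'' = t := t.take_spec hyt
    have hlen2 : t'.length + t''.length = t.length := by
      have := congrArg Walk.length hspec2; rwa [Walk.length_append] at this
    have ht''2 : 2 ≤ t''.length := by
      rcases Nat.lt_or_ge t''.length 2 with h2 | h2
      · interval_cases h : t''.length
        · exact absurd (Walk.eq_of_length_eq_zero h) hxy.symm
        · exfalso
          have : t''.edges = [s(y, x)] := edges_of_length_one h
          have he : s(y, x) ∈ q.edges := by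
            rw [← hspec]
            have : s(y,x) ∈ t.edges := by
              rw [← hspec2, Walk.edges_append, List.mem_append]
              exact Or.inr (by simp [this])
            rw [Walk.edges_append, List.mem_append]; exact Or.inl this
          rw [Sym2.eq_swap] at he
          exact hne he
      · exact h2
    have hr : ∀ x' ∈ (t'.append (Walk.cons hadj.symm d)).support, x' ∈ S := by
      intro x' hx'
      rw [Walk.mem_support_append_iff] at hx'
      rcases hx' with h1 | h1
      · exact hqS _ ((q.support_takeUntil_subset hx) ((t.support_takeUntil_subset hyt) h1))
      · rw [Walk.support_cons, List.mem_cons] at h1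
        rcases h1 with rfl | h1
        · exact hqS _ ((q.support_takeUntil_subset hx) hyt)
        · exact hqS _ ((q.support_dropUntil_subset hx) h1)
    have := hmin _ hr
    rw [Walk.length_append, Walk.length_cons] at this
    omega
  · -- x occurs before y
    set e := d.takeUntil y hyd with he'
    set f := d.dropUntil y hyd with hf'
    have hspec2 : e.append f = d := d.take_spec hyd
    have hlen2 : e.length + f.length = d.length := by
      have := congrArg Walk.length hspec2; rwa [Walk.length_append] at this
    have he2 : 2 ≤ e.length := by
      rcases Nat.lt_or_ge e.length 2 with h2 | h2
      · interval_cases h : e.length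
        · exact absurd (Walk.eq_of_length_eq_zero h) hxy
        · exfalso
          have : e.edges = [s(x, y)] := edges_of_length_one h
          have he : s(x, y) ∈ q.edges := by
            rw [← hspec]
            have hh : s(x,y) ∈ d.edges := by
              rw [← hspec2, Walk.edges_append, List.mem_append]
              exact Or.inl (by simp [this])
            rw [Walk.edges_append, List.mem_append]; exact Or.inr hh
          exact hne he
      · exact h2
    have hr : ∀ x' ∈ (t.append (Walk.cons hadj f)).support, x' ∈ S := by
      intro x' hx'
      rw [Walk.mem_support_append_iff] at hx'
      rcases hx' with h1 | h1
      · exact hqS _ ((q.support_takeUntil_subset hx) h1)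
      · rw [Walk.support_cons, List.mem_cons] at h1
        rcases h1 with rfl | h1
        · exact hqS _ ((q.support_takeUntil_subset hx) t.end_mem_support)
        · exact hqS _ ((q.support_dropUntil_subset hx) (d.support_dropUntil_subset hyd h1))
    have := hmin _ hr
    rw [Walk.length_append, Walk.length_cons] at this
    omega

end Chordless

section PathOrder

variable {G : SimpleGraph V} [DecidableEq V]

/-- On a path, for two distinct vertices one comes before the other: we get a prefix
walk to the first avoiding the second, and a suffix walk from the second avoiding the
first. -/
lemma path_order {a b : V} {p : G.Walk a b} (hp : p.IsPath) {f g : V}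
    (hf : f ∈ p.support) (hg : g ∈ p.support) (hfg : f ≠ g) :
    ((∃ q : G.Walk a f, (∀ x ∈ q.support, x ∈ p.support) ∧ g ∉ q.support) ∧
     (∃ q : G.Walk g b, (∀ x ∈ q.support, x ∈ p.support) ∧ f ∉ q.support)) ∨
    ((∃ q : G.Walk a g, (∀ x ∈ q.support, x ∈ p.support) ∧ f ∉ q.support) ∧
     (∃ q : G.Walk f b, (∀ x ∈ q.support, x ∈ p.support) ∧ g ∉ q.support)) := by
  induction p with
  | nil =>
    rw [Walk.support_nil, List.mem_singleton] at hf hg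
    exact absurd (hf.trans hg.symm) hfg
  | @cons x y z hxy q ih =>
    rw [Walk.cons_isPath_iff] at hp
    obtain ⟨hqp, hxq⟩ := hp
    by_cases hfx : f = x
    · subst hfx
      have hg' : g ∈ q.support := by
        rw [Walk.support_cons, List.mem_cons] at hg
        rcases hg with rfl | hg; · exact absurd rfl hfg
        · exact hg
      refine Or.inl ⟨⟨Walk.nil, by simp, by simp [Ne.symm hfg]⟩,
        ⟨q.dropUntil g hg', fun s hs => by simp [q.support_dropUntil_subset hg' hs], ?_⟩⟩
      intro hmem
      exact hxq (q.support_dropUntil_subset hg' hmem)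
    · by_cases hgx : g = x
      · subst hgx
        have hf' : f ∈ q.support := by
          rw [Walk.support_cons, List.mem_cons] at hf
          rcases hf with rfl | hf; · exact absurd rfl hfx
          · exact hf
        refine Or.inr ⟨⟨Walk.nil, by simp, by simp [hfx]⟩,
          ⟨q.dropUntil f hf', fun s hs => by simp [q.support_dropUntil_subset hf' hs], ?_⟩⟩
        intro hmem
        exact hxq (q.support_dropUntil_subset hf' hmem)
      · have hf' : f ∈ q.support := by
          rw [Walk.support_cons, List.mem_cons] at hf; tauto
        have hg' : g ∈ q.support := by
          rw [Walk.support_cons, List.mem_cons] at hg; tauto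
        rcases ih hqp hf' hg' with ⟨⟨q1, s1, g1⟩, ⟨q2, s2, f2⟩⟩ | ⟨⟨q1, s1, g1⟩, ⟨q2, s2, f2⟩⟩
        · exact Or.inl ⟨⟨Walk.cons hxy q1, fun s hs => by
              rw [Walk.support_cons, List.mem_cons] at hs ⊢
              rcases hs with rfl | hs; exacts [Or.inl rfl, Or.inr (s1 s hs)],
            by rw [Walk.support_cons, List.mem_cons]; push_neg; exact ⟨hgx, g1⟩⟩,
            ⟨q2, fun s hs => by simp [s2 s hs], f2⟩⟩
        · exact Or.inr ⟨⟨Walk.cons hxy q1, fun s hs => by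
              rw [Walk.support_cons, List.mem_cons] at hs ⊢
              rcases hs with rfl | hs; exacts [Or.inl rfl, Or.inr (s1 s hs)],
            by rw [Walk.support_cons, List.mem_cons]; push_neg; exact ⟨hfx, g1⟩⟩,
            ⟨q2, fun s hs => by simp [s2 s hs], f2⟩⟩

end PathOrder


section Sides

variable [DecidableEq V] (G : SimpleGraph V) (C : Set V) (w u : V)

/-- the `w`-side of the cut vertex `f` of `G - C` (with conventions for `f = w, u`). -/
def XX (f : V) : Set V :=
  if f = w then ∅ else if f = u then (C ∪ {u})ᶜ else {v | Linked G (C ∪ {f})ᶜ w v}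

/-- the `u`-side of the cut vertex `f` of `G - C`. -/
def YY (f : V) : Set V :=
  if f = u then ∅ else if f = w then (C ∪ {w})ᶜ else {v | Linked G (C ∪ {f})ᶜ u v}

variable {G C w u}

lemma XX_w : XX G C w u w = ∅ := if_pos rfl

lemma XX_u (h : u ≠ w) : XX G C w u u = (C ∪ {u})ᶜ := by
  rw [XX, if_neg h, if_pos rfl]

lemma XX_g {f : V} (h1 : f ≠ w) (h2 : f ≠ u) :
    XX G C w u f = {v | Linked G (C ∪ {f})ᶜ w v} := by
  rw [XX, if_neg h1, if_neg h2]

lemma YY_u : YY G C w u u = ∅ := if_pos rfl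

lemma YY_w (h : w ≠ u) : YY G C w u w = (C ∪ {w})ᶜ := by
  rw [YY, if_neg h, if_pos rfl]

lemma YY_g {f : V} (h1 : f ≠ w) (h2 : f ≠ u) :
    YY G C w u f = {v | Linked G (C ∪ {f})ᶜ u v} := by
  rw [YY, if_neg h2, if_neg h1]

end Sides

lemma mem_cUnion {C : Set V} {f v : V} (h1 : v ∉ C) (h2 : v ≠ f) : v ∈ (C ∪ {f})ᶜ := by
  simp only [Set.mem_compl_iff, Set.mem_union, Set.mem_singleton_iff]
  push_neg
  exact ⟨h1, h2⟩

lemma of_mem_cUnion {C : Set V} {f v : V} (h : v ∈ (C ∪ {f})ᶜ) : v ∉ C ∧ v ≠ f := by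
  simpa only [Set.mem_compl_iff, Set.mem_union, Set.mem_singleton_iff, not_or] using h

end Tutte17
/-- `G` is `k`-connected: it has more than `k` vertices and remains connected
after deleting any set of fewer than `k` vertices. -/
def IsKConnected {V : Type*} [Fintype V] (G : SimpleGraph V) (k : ℕ) : Prop :=
  k < Fintype.card V ∧ ∀ s : Set V, s.ncard < k → (G.induce sᶜ).Connected

/-- (Tutte) For every 3-connected graph `G` and nonadjacent vertices `w, u`, there is a
chordless path `P` from `w` to `u` such that `G - V(P)` is connected. -/
theorem stmt17 {V : Type*} [Fintype V] (G : SimpleGraph V)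
    (hconn : IsKConnected G 3) (w u : V) (hne : w ≠ u) (hna : ¬ G.Adj w u) :
    ∃ P : G.Walk w u, P.IsPath ∧
      (∀ x ∈ P.support, ∀ y ∈ P.support, G.Adj x y → s(x, y) ∈ P.edges) ∧
      (G.induce {v : V | v ∉ P.support}).Connected := by
  classical
  open Tutte17 in
  obtain ⟨hV, hconn'⟩ := hconn
  have hsep : ∀ s : Set V, s.ncard < 3 → ∀ a, a ∉ s → ∀ b, b ∉ s → Linked G sᶜ a b :=
    fun s hs a ha b hb => linked_of_induce_connected (hconn' s hs) ha hb
  -- a vertex different from w and u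
  have hv₀ : ∃ v : V, v ≠ w ∧ v ≠ u := by
    by_contra hcon
    push_neg at hcon
    have hsub : (Finset.univ : Finset V) ⊆ {w, u} := by
      intro v _
      rcases eq_or_ne v w with rfl | hvw
      · simp
      · simp [hcon v hvw]
    have := Finset.card_le_card hsub
    have h2 : ({w, u} : Finset V).card ≤ 2 := Finset.card_insert_le _ _ |>.trans (by simp)
    simp only [Finset.card_univ] at this
    omega
  obtain ⟨v₀, hv₀w, hv₀u⟩ := hv₀
  -- the collection of achievable component sizes
  set A : Set ℕ := {n | ∃ p : G.Walk w u, p.IsPath ∧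
      (∀ x ∈ p.support, ∀ y ∈ p.support, G.Adj x y → s(x, y) ∈ p.edges) ∧
      ∃ c, c ∉ p.support ∧ n = {v | Linked G {x | x ∉ p.support} c v}.ncard} with hA
  have hAne : A.Nonempty := by
    have h1 : Linked G ({v₀} : Set V)ᶜ w u :=
      hsep {v₀} (by simp) w (by simp [hv₀w.symm]) u (by simp [hv₀u.symm])
    obtain ⟨p, hp, hpS, hpc⟩ := exists_chordless_path h1
    have hv₀p : v₀ ∉ p.support := fun h => (hpS v₀ h) rfl
    exact ⟨_, p, hp, hpc, v₀, hv₀p, rfl⟩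
  have hAbdd : BddAbove A := by
    refine ⟨Fintype.card V, fun n hn => ?_⟩
    obtain ⟨p, _, _, c, _, rfl⟩ := hn
    calc {v | Linked G {x | x ∉ p.support} c v}.ncard
        ≤ (Set.univ : Set V).ncard := Set.ncard_le_ncard (Set.subset_univ _) (Set.toFinite _)
      _ = Fintype.card V := by rw [Set.ncard_univ, Nat.card_eq_fintype_card]
  obtain ⟨P, hPath, hChord, c₀, hc₀P, hNC⟩ := Nat.sSup_mem hAne hAbdd
  have hmax : ∀ p : G.Walk w u, p.IsPath →
      (∀ x ∈ p.support, ∀ y ∈ p.support, G.Adj x y → s(x, y) ∈ p.edges) →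
      ∀ c, c ∉ p.support → {v | Linked G {x | x ∉ p.support} c v}.ncard ≤ sSup A :=
    fun p h1 h2 c hc => le_csSup hAbdd ⟨p, h1, h2, c, hc, rfl⟩
  set C : Set V := {v | Linked G {x | x ∉ P.support} c₀ v} with hCdef
  -- basic facts about C
  have hc₀C : c₀ ∈ C := Linked.refl hc₀P
  have hCP : ∀ v ∈ C, v ∉ P.support := fun v hv => hv.mem_right
  have hCclosed : ∀ v ∈ C, ∀ q, G.Adj v q → q ∉ P.support → q ∈ C :=
    fun v hv q ha hq => hv.adj ha hq
  have hCconn : ∀ a ∈ C, ∀ b ∈ C, Linked G C a b :=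
    fun a ha b hb => (Linked.within ha).symm.trans (Linked.within hb)
  have hwC : w ∉ C := fun h => hCP w h P.start_mem_support
  have huC : u ∉ C := fun h => hCP u h P.end_mem_support
  have hsuppC : ∀ x ∈ P.support, x ∉ C := fun x hx hxC => hCP x hxC hx
  have hZsupp : ∀ z, z ∉ C → (∃ c ∈ C, G.Adj c z) → z ∈ P.support := by
    rintro z hz ⟨c, hc, hadj⟩
    by_contra hzP
    exact hz (hCclosed c hc z hadj hzP)
  -- maximality: every attachment of C other than w, u cuts w from u in G - C
  have hcut : ∀ z, z ∉ C → (∃ c ∈ C, G.Adj c z) → z ≠ w → z ≠ u →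
      ¬ Linked G (C ∪ {z})ᶜ w u := by
    rintro z hzC ⟨c, hcC, hadj⟩ hzw hzu hlink
    obtain ⟨p', hp'path, hp'S, hp'chord⟩ := exists_chordless_path hlink
    have hsubC : ∀ v ∈ C, v ∉ p'.support := fun v hv hmem => (hp'S v hmem) (Or.inl hv)
    have hzp' : z ∉ p'.support := fun hmem => (hp'S z hmem) (Or.inr rfl)
    have hc₀p' : c₀ ∉ p'.support := hsubC c₀ hc₀C
    have hCsub : C ⊆ {v | Linked G {x | x ∉ p'.support} c₀ v} := by
      intro v hv
      exact (Linked.within hv).mono (fun y hy => hsubC y hy)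
    have hzsub : z ∈ {v | Linked G {x | x ∉ p'.support} c₀ v} :=
      (hCsub hcC).adj hadj hzp'
    have h1 : (insert z C).ncard ≤ {v | Linked G {x | x ∉ p'.support} c₀ v}.ncard :=
      Set.ncard_le_ncard (Set.insert_subset hzsub hCsub) (Set.toFinite _)
    rw [Set.ncard_insert_of_notMem hzC (Set.toFinite _)] at h1
    have h2 := hmax p' hp'path hp'chord c₀ hc₀p'
    omega
  -- main claim : everything off the path is in C
  have hR : ∀ r, r ∉ P.support → r ∈ C := by
    intro r hrP
    by_contra hrC
    -- The genuine attachments of C (cut vertices of G - C), plus w and u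
    set Gen : Set V := {z | (z ∉ C ∧ ∃ c ∈ C, G.Adj c z) ∧ z ≠ w ∧ z ≠ u} with hGen
    set F : Set V := insert w (insert u Gen) with hF
    have hFmem : ∀ f, f ∈ F ↔ (f = w ∨ f = u ∨ f ∈ Gen) := by
      intro f; simp [hF, Set.mem_insert_iff]
    have hwF : w ∈ F := (hFmem w).2 (Or.inl rfl)
    have huF : u ∈ F := (hFmem u).2 (Or.inr (Or.inl rfl))
    have hGenP : ∀ f ∈ Gen, f ∈ P.support := fun f hf => hZsupp f hf.1.1 hf.1.2
    have hFP : ∀ f ∈ F, f ∈ P.support := by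
      intro f hf
      rcases (hFmem f).1 hf with rfl | rfl | hg
      · exact P.start_mem_support
      · exact P.end_mem_support
      · exact hGenP f hg
    have hFC : ∀ f ∈ F, f ∉ C := by
      intro f hf
      rcases (hFmem f).1 hf with rfl | rfl | hg
      exacts [hwC, huC, hg.1.1]
    have hXsub : ∀ f ∈ F, XX G C w u f ⊆ (C ∪ {f})ᶜ := by
      intro f hf
      rcases (hFmem f).1 hf with rfl | rfl | hg
      · rw [XX_w]; exact Set.empty_subset _
      · rw [XX_u hne.symm]
      · rw [XX_g hg.2.1 hg.2.2]; exact fun v hv => hv.mem_right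
    have hYsub : ∀ f ∈ F, YY G C w u f ⊆ (C ∪ {f})ᶜ := by
      intro f hf
      rcases (hFmem f).1 hf with rfl | rfl | hg
      · rw [YY_w hne]
      · rw [YY_u]; exact Set.empty_subset _
      · rw [YY_g hg.2.1 hg.2.2]; exact fun v hv => hv.mem_right
    have hXw : ∀ f ∈ F, f ≠ w → w ∈ XX G C w u f := by
      intro f hf hfw
      rcases (hFmem f).1 hf with rfl | rfl | hg
      · exact absurd rfl hfw
      · rw [XX_u hne.symm]; exact mem_cUnion hwC hne
      · rw [XX_g hg.2.1 hg.2.2]; exact Linked.refl (mem_cUnion hwC (Ne.symm hg.2.1))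
    have hYu : ∀ f ∈ F, f ≠ u → u ∈ YY G C w u f := by
      intro f hf hfu
      rcases (hFmem f).1 hf with rfl | rfl | hg
      · rw [YY_w hne]; exact mem_cUnion huC hne.symm
      · exact absurd rfl hfu
      · rw [YY_g hg.2.1 hg.2.2]; exact Linked.refl (mem_cUnion huC (Ne.symm hg.2.2))
    have hXff : ∀ f ∈ F, f ∉ XX G C w u f :=
      fun f hf h => (of_mem_cUnion (hXsub f hf h)).2 rfl
    have hYff : ∀ f ∈ F, f ∉ YY G C w u f :=
      fun f hf h => (of_mem_cUnion (hYsub f hf h)).2 rfl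
    have hdisj : ∀ f ∈ F, ∀ v, v ∈ XX G C w u f → v ∈ YY G C w u f → False := by
      intro f hf v hvX hvY
      rcases (hFmem f).1 hf with rfl | rfl | hg
      · rw [XX_w] at hvX; exact hvX
      · rw [YY_u] at hvY; exact hvY
      · rw [XX_g hg.2.1 hg.2.2] at hvX
        rw [YY_g hg.2.1 hg.2.2] at hvY
        exact hcut f hg.1.1 hg.1.2 hg.2.1 hg.2.2 (hvX.trans hvY.symm)
    have hXclosed : ∀ f ∈ F, ∀ v ∈ XX G C w u f, ∀ q, G.Adj v q → q ∉ C → q ≠ f →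
        q ∈ XX G C w u f := by
      intro f hf v hv q hadj hqC hqf
      rcases (hFmem f).1 hf with rfl | rfl | hg
      · rw [XX_w] at hv; exact absurd hv (Set.notMem_empty v)
      · rw [XX_u hne.symm]; exact mem_cUnion hqC hqf
      · rw [XX_g hg.2.1 hg.2.2] at hv ⊢
        exact hv.adj hadj (mem_cUnion hqC hqf)
    have hYclosed : ∀ f ∈ F, ∀ v ∈ YY G C w u f, ∀ q, G.Adj v q → q ∉ C → q ≠ f →
        q ∈ YY G C w u f := by
      intro f hf v hv q hadj hqC hqf
      rcases (hFmem f).1 hf with rfl | rfl | hg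
      · rw [YY_w hne]; exact mem_cUnion hqC hqf
      · rw [YY_u] at hv; exact absurd hv (Set.notMem_empty v)
      · rw [YY_g hg.2.1 hg.2.2] at hv ⊢
        exact hv.adj hadj (mem_cUnion hqC hqf)
    -- every path vertex is on one of the two sides of a genuine cut vertex
    have hSuppSide : ∀ f ∈ Gen, ∀ t ∈ P.support, t ≠ f →
        t ∈ XX G C w u f ∪ YY G C w u f := by
      intro f hg t htP htf
      have hfP := hGenP f hg
      rcases path_order hPath htP hfP htf with ⟨⟨q1, s1, n1⟩, -⟩ | ⟨-, ⟨q2, s2, n2⟩⟩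
      · left
        rw [XX_g hg.2.1 hg.2.2]
        exact ⟨q1, fun x hx => mem_cUnion (hsuppC x (s1 x hx)) (fun h => n1 (h ▸ hx))⟩
      · right
        rw [YY_g hg.2.1 hg.2.2]
        exact Linked.symm ⟨q2, fun x hx => mem_cUnion (hsuppC x (s2 x hx)) (fun h => n2 (h ▸ hx))⟩
    -- the two sides cover everything outside C
    have hcover : ∀ f ∈ F, ∀ v, v ∉ C → v ≠ f → v ∈ XX G C w u f ∪ YY G C w u f := by
      intro f hf v hvC hvf
      rcases (hFmem f).1 hf with rfl | rfl | hg
      · right; rw [YY_w hne]; exact mem_cUnion hvC hvf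
      · left; rw [XX_u hne.symm]; exact mem_cUnion hvC hvf
      · by_contra hvXY
        have hfF : f ∈ F := (hFmem f).2 (Or.inr (Or.inr hg))
        have hfP := hGenP f hg
        have hc₀f : c₀ ≠ f := fun h => hc₀P (h ▸ hfP)
        have hlink := hsep {f} (by simp) v (by simp [hvf]) c₀ (by simp [hc₀f])
        have hstay : c₀ ∈ (C ∪ {f})ᶜ \ (XX G C w u f ∪ YY G C w u f) := by
          refine hlink.stay ⟨mem_cUnion hvC hvf, hvXY⟩ ?_
          intro t ht q hadj hq
          have hqf : q ≠ f := by simpa using hq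
          have htC : t ∉ C := (of_mem_cUnion ht.1).1
          have htf : t ≠ f := (of_mem_cUnion ht.1).2
          by_cases hqC : q ∈ C
          · exact absurd (hSuppSide f hg t (hZsupp t htC ⟨q, hqC, hadj.symm⟩) htf) ht.2
          · refine ⟨mem_cUnion hqC hqf, ?_⟩
            intro hmem
            rcases hmem with hmem | hmem
            · exact ht.2 (Or.inl (hXclosed f hfF q hmem t hadj.symm htC htf))
            · exact ht.2 (Or.inr (hYclosed f hfF q hmem t hadj.symm htC htf))
        exact (of_mem_cUnion hstay.1).1 hc₀C
    -- monotonicity of the sides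
    have hXmono : ∀ f ∈ F, ∀ g ∈ F, f ∈ YY G C w u g →
        (∀ x ∈ XX G C w u g, x ∈ XX G C w u f) ∧ g ∈ XX G C w u f := by
      intro f hf g hg hfY
      have hfw : f ≠ w := by
        intro e
        rcases (hFmem g).1 hg with hgw | hgu2 | hgg
        · rw [hgw] at hfY; exact hYff w hwF (e ▸ hfY)
        · rw [hgu2, YY_u] at hfY; exact hfY
        · rw [e] at hfY
          exact hdisj g hg w (hXw g hg hgg.2.1) hfY
      have hgu : g ≠ u := fun e => by rw [e, YY_u] at hfY; exact hfY
      by_cases hfu : f = u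
      · rw [hfu, XX_u hne.symm]
        have hguX : u ∉ XX G C w u g := fun hx => hdisj g hg u hx (hYu g hg hgu)
        refine ⟨fun x hx => ?_, mem_cUnion (hFC g hg) hgu⟩
        exact mem_cUnion (of_mem_cUnion (hXsub g hg hx)).1 (fun h2 => hguX (h2 ▸ hx))
      · have hfgen : f ∈ Gen := by
          rcases (hFmem f).1 hf with rfl | rfl | h
          exacts [absurd rfl hfw, absurd rfl hfu, h]
        rw [XX_g hfw hfu]
        constructor
        · intro x hx
          rcases (hFmem g).1 hg with hgw | hgu2 | hgg
          · rw [hgw, XX_w] at hx; exact absurd hx (Set.notMem_empty x)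
          · exact absurd hgu2 hgu
          · rw [XX_g hgg.2.1 hgg.2.2] at hx
            refine (Linked.within hx).mono ?_
            intro y hy
            have hyX : y ∈ XX G C w u g := by rw [XX_g hgg.2.1 hgg.2.2]; exact hy
            refine mem_cUnion (of_mem_cUnion (hXsub g hg hyX)).1 ?_
            exact fun h => hdisj g hg f (h ▸ hyX) hfY
        · rcases (hFmem g).1 hg with hgw | hgu2 | hgg
          · rw [hgw]; exact Linked.refl (mem_cUnion hwC (Ne.symm hfw))
          · exact absurd hgu2 hgu
          · have hfg : f ≠ g := fun h => hYff g hg (h ▸ hfY)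
            rcases path_order hPath (hGenP f hfgen) (hGenP g hgg) hfg with
              ⟨⟨q1, s1, n1⟩, -⟩ | ⟨⟨q1, s1, n1⟩, -⟩
            · exfalso
              have : f ∈ XX G C w u g := by
                rw [XX_g hgg.2.1 hgg.2.2]
                exact ⟨q1, fun x hx => mem_cUnion (hsuppC x (s1 x hx)) (fun h => n1 (h ▸ hx))⟩
              exact hdisj g hg f this hfY
            · exact ⟨q1, fun x hx => mem_cUnion (hsuppC x (s1 x hx)) (fun h => n1 (h ▸ hx))⟩
    have hYmono : ∀ f ∈ F, ∀ g ∈ F, f ∈ XX G C w u g →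
        (∀ x ∈ YY G C w u g, x ∈ YY G C w u f) ∧ g ∈ YY G C w u f := by
      intro f hf g hg hfX
      have hfu : f ≠ u := by
        intro e
        rcases (hFmem g).1 hg with hgw | hgu2 | hgg
        · rw [hgw, XX_w] at hfX; exact hfX
        · rw [hgu2] at hfX; exact hXff u huF (e ▸ hfX)
        · rw [e] at hfX
          exact hdisj g hg u hfX (hYu g hg hgg.2.2)
      have hgw : g ≠ w := fun e => by rw [e, XX_w] at hfX; exact hfX
      by_cases hfw : f = w
      · rw [hfw, YY_w hne]
        have hgwY : w ∉ YY G C w u g := fun hx => hdisj g hg w (hXw g hg hgw) hx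
        refine ⟨fun x hx => ?_, mem_cUnion (hFC g hg) hgw⟩
        exact mem_cUnion (of_mem_cUnion (hYsub g hg hx)).1 (fun h2 => hgwY (h2 ▸ hx))
      · have hfgen : f ∈ Gen := by
          rcases (hFmem f).1 hf with rfl | rfl | h
          exacts [absurd rfl hfw, absurd rfl hfu, h]
        rw [YY_g hfw hfu]
        constructor
        · intro x hx
          rcases (hFmem g).1 hg with hgw2 | hgu2 | hgg
          · exact absurd hgw2 hgw
          · rw [hgu2, YY_u] at hx; exact absurd hx (Set.notMem_empty x)
          · rw [YY_g hgg.2.1 hgg.2.2] at hx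
            refine (Linked.within hx).mono ?_
            intro y hy
            have hyY : y ∈ YY G C w u g := by rw [YY_g hgg.2.1 hgg.2.2]; exact hy
            refine mem_cUnion (of_mem_cUnion (hYsub g hg hyY)).1 ?_
            exact fun h => hdisj g hg f hfX (h ▸ hyY)
        · rcases (hFmem g).1 hg with hgw2 | hgu2 | hgg
          · exact absurd hgw2 hgw
          · rw [hgu2]; exact Linked.refl (mem_cUnion huC (Ne.symm hfu))
          · have hfg : f ≠ g := fun h => hXff g hg (h ▸ hfX)
            rcases path_order hPath (hGenP f hfgen) (hGenP g hgg) hfg with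
              ⟨-, ⟨q2, s2, n2⟩⟩ | ⟨-, ⟨q2, s2, n2⟩⟩
            · exact Linked.symm
                ⟨q2, fun x hx => mem_cUnion (hsuppC x (s2 x hx)) (fun h => n2 (h ▸ hx))⟩
            · exfalso
              have : f ∈ YY G C w u g := by
                rw [YY_g hgg.2.1 hgg.2.2]
                exact Linked.symm
                  ⟨q2, fun x hx => mem_cUnion (hsuppC x (s2 x hx)) (fun h => n2 (h ▸ hx))⟩
              exact hdisj g hg f hfX this
    -- now pick extremal cut vertices around r
    have hrF : ∀ f ∈ F, r ≠ f := fun f hf h => hrP (h ▸ hFP f hf)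
    have hrYw : r ∈ YY G C w u w := by rw [YY_w hne]; exact mem_cUnion hrC (hrF w hwF)
    have hrXu : r ∈ XX G C w u u := by rw [XX_u hne.symm]; exact mem_cUnion hrC (hrF u huF)
    obtain ⟨g, ⟨hgF, hgY⟩, hgmax⟩ :=
      Set.Finite.exists_maximalFor (fun f => (XX G C w u f).ncard)
        {f ∈ F | r ∈ YY G C w u f} (Set.toFinite _) ⟨w, hwF, hrYw⟩
    obtain ⟨h, ⟨hhF, hhX⟩, hhmax⟩ :=
      Set.Finite.exists_maximalFor (fun f => (YY G C w u f).ncard)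
        {f ∈ F | r ∈ XX G C w u f} (Set.toFinite _) ⟨u, huF, hrXu⟩
    have hghne : g ≠ h := fun e => hdisj g hgF r (e ▸ hhX) hgY
    have hXgh : (∀ x ∈ XX G C w u g, x ∈ XX G C w u h) ∧ g ∈ XX G C w u h := by
      rcases hcover g hgF h (hFC h hhF) (Ne.symm hghne) with hX | hY
      · exfalso
        obtain ⟨hmono, -⟩ := hYmono h hhF g hgF hX
        exact hdisj h hhF r hhX (hmono r hgY)
      · exact hXmono h hhF g hgF hY
    -- the middle region M
    set M : Set V := YY G C w u g ∩ XX G C w u h with hM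
    have hrM : r ∈ M := ⟨hgY, hhX⟩
    have hMnC : ∀ m ∈ M, m ∉ C := fun m hm hc => (of_mem_cUnion (hYsub g hgF hm.1)).1 hc
    have hwM : w ∉ M := by
      intro hm
      by_cases hgw : g = w
      · subst hgw; exact hYff g hgF hm.1
      · exact hdisj g hgF w (hXw g hgF hgw) hm.1
    have huM : u ∉ M := by
      intro hm
      by_cases hhu : h = u
      · subst hhu; exact hXff h hhF hm.2
      · exact hdisj h hhF u hm.2 (hYu h hhF hhu)
    have hMZ : ∀ z ∈ M, ¬ ∃ c ∈ C, G.Adj c z := by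
      rintro z hz ⟨c, hc, hadj⟩
      have hzC := hMnC z hz
      have hzw : z ≠ w := fun e => hwM (e ▸ hz)
      have hzu : z ≠ u := fun e => huM (e ▸ hz)
      have hzGen : z ∈ Gen := ⟨⟨hzC, c, hc, hadj⟩, hzw, hzu⟩
      have hzF : z ∈ F := (hFmem z).2 (Or.inr (Or.inr hzGen))
      obtain ⟨hXmz, hgXz⟩ := hXmono z hzF g hgF hz.1
      obtain ⟨hYmz, hhYz⟩ := hYmono z hzF h hhF hz.2
      have hrz : r ≠ z := hrF z hzF
      rcases hcover z hzF r hrC hrz with hrX | hrY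
      · -- contradicts maximality of h
        have hsub : YY G C w u h ⊂ YY G C w u z :=
          Set.ssubset_iff_subset_ne.2 ⟨fun x hx => hYmz x hx,
            fun e => hYff h hhF (e ▸ hhYz)⟩
        have hlt := Set.ncard_lt_ncard hsub (Set.toFinite _)
        have heq : (YY G C w u z).ncard ≤ (YY G C w u h).ncard := hhmax (j := z) ⟨hzF, hrX⟩ (le_of_lt hlt)
        omega
      · -- contradicts maximality of g
        have hsub : XX G C w u g ⊂ XX G C w u z :=
          Set.ssubset_iff_subset_ne.2 ⟨fun x hx => hXmz x hx,
            fun e => hXff g hgF (e ▸ hgXz)⟩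
        have hlt := Set.ncard_lt_ncard hsub (Set.toFinite _)
        have heq : (XX G C w u z).ncard ≤ (XX G C w u g).ncard := hgmax (j := z) ⟨hzF, hrY⟩ (le_of_lt hlt)
        omega
    have hMclosed : ∀ m ∈ M, ∀ q, G.Adj m q → q ≠ g → q ≠ h → q ∈ M := by
      intro m hm q hadj hqg hqh
      by_cases hqC : q ∈ C
      · exact absurd ⟨q, hqC, hadj.symm⟩ (hMZ m hm)
      · exact ⟨hYclosed g hgF m hm.1 q hadj hqC hqg, hXclosed h hhF m hm.2 q hadj hqC hqh⟩
    -- final 2-separation contradiction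
    have hcard : ({g, h} : Set V).ncard < 3 :=
      lt_of_le_of_lt (Set.ncard_insert_le g {h}) (by simp)
    have hc₀gh : c₀ ∉ ({g, h} : Set V) := by
      simp only [Set.mem_insert_iff, Set.mem_singleton_iff, not_or]
      exact ⟨fun e => hc₀P (e ▸ hFP g hgF), fun e => hc₀P (e ▸ hFP h hhF)⟩
    have hrgh : r ∉ ({g, h} : Set V) := by
      simp only [Set.mem_insert_iff, Set.mem_singleton_iff, not_or]
      exact ⟨hrF g hgF, hrF h hhF⟩
    have hlink := hsep {g, h} hcard r hrgh c₀ hc₀gh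
    have hc₀M : c₀ ∈ M := by
      refine hlink.stay hrM ?_
      intro t ht q hadj hq
      simp only [Set.mem_compl_iff, Set.mem_insert_iff, Set.mem_singleton_iff, not_or] at hq
      exact hMclosed t ht q hadj hq.1 hq.2
    exact hMnC c₀ hc₀M hc₀C

  refine ⟨P, hPath, hChord, ?_⟩
  have hset : {v : V | v ∉ P.support} = C :=
    Set.Subset.antisymm (fun v hv => hR v hv) (fun v hv => hCP v hv)
  rw [hset]
  exact induce_connected_of_linked ⟨c₀, hc₀C⟩ hCconn
end
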